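/- Let q = p^e with p an odd prime, m, m₁ positive integers with m₁ | m and m/m₁ odd, and α a generator of GF(q^m)^*. For a = 0, the number of squares b in GF(q^m)^* (i.e., b ∈ ⟨α²⟩) with Tr_{q^m/q^{m₁}}(b) = 0 equals (q^{m−m₁} − 1)/2. -/

import Mathlib

/-- Let q = p^e with p an odd prime, m₁ ∣ m with m/m₁ odd. The number of nonzero squares b
in GF(q^m) with Tr_{q^m/q^{m₁}}(b) = 0 equals (q^{m−m₁} − 1)/2. -/
theorem stmt9 {p e m m₁ : ℕ} (hp : p.Prime) (hodd : Odd p) (he : 0 < e)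
    (hm₁ : 0 < m₁) (hdvd : m₁ ∣ m) (hoddq : Odd (m / m₁))
    {L K : Type*} [Field L] [Field K] [Fintype L] [Fintype K] [DecidableEq L]
    [Algebra L K] [FiniteDimensional L K]
    (q : ℕ) (hq : q = p ^ e)
    (hcardL : Fintype.card L = q ^ m₁) (hcardK : Fintype.card K = q ^ m) :
    Nat.card {b : K // b ≠ 0 ∧ (∃ y : K, y ^ 2 = b) ∧ Algebra.trace L K b = 0} =
      (q ^ (m - m₁) - 1) / 2 := by
  classical
  -- basic arithmetic facts
  have hqodd : Odd q := by rw [hq]; exact hodd.pow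
  have hq1 : 1 < q := by
    rw [hq]; exact Nat.one_lt_pow he.ne' hp.one_lt
  set n := m / m₁ with hn
  have hmn : m₁ * n = m := Nat.mul_div_cancel' hdvd
  have hnpos : 0 < n := hoddq.pos
  have hm₁m : m₁ ≤ m := hmn ▸ Nat.le_mul_of_pos_right m₁ hnpos
  set ℓ := Fintype.card L with hℓ
  have hℓq : ℓ = q ^ m₁ := hcardL
  have hℓodd : Odd ℓ := by rw [hℓq]; exact hqodd.pow
  have hℓ1 : 1 < ℓ := by rw [hℓq]; exact Nat.one_lt_pow (by omega) hq1
  have hKℓ : Fintype.card K = ℓ ^ n := by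
    rw [hcardK, hℓq, ← pow_mul, hmn]
  have hKodd : Odd (Fintype.card K) := by rw [hKℓ]; exact hℓodd.pow
  -- characteristics are odd
  have hcharL : ringChar L ≠ 2 := by
    intro h
    have h2 := FiniteField.even_card_of_char_two h
    rw [Nat.odd_iff] at hℓodd; omega
  have hcharK : ringChar K ≠ 2 := by
    intro h
    have h2 := FiniteField.even_card_of_char_two h
    rw [Nat.odd_iff] at hKodd; omega
  -- a nonsquare c in L
  obtain ⟨c, hc⟩ := FiniteField.exists_nonsquare (F := L) hcharL
  have hc0 : c ≠ 0 := by rintro rfl; exact hc (IsSquare.zero)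
  set c' : K := algebraMap L K c with hc'
  have hc'0 : c' ≠ 0 := by
    simp only [hc', ne_eq, map_eq_zero]; exact hc0
  -- c is a nonsquare in K since n is odd
  have hcL : c ^ (ℓ / 2) = -1 :=
    (FiniteField.pow_dichotomy hcharL hc0).resolve_left
      (fun h => hc ((FiniteField.isSquare_iff hcharL hc0).mpr h))
  have hS : ∀ N : ℕ, Odd N → Odd (∑ i ∈ Finset.range N, ℓ ^ i) := by
    intro N hN
    rw [Nat.odd_iff, Finset.sum_nat_mod]
    have : ∀ i ∈ Finset.range N, ℓ ^ i % 2 = 1 := fun i _ => by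
      rw [← Nat.odd_iff]; exact hℓodd.pow
    rw [Finset.sum_congr rfl this, Finset.sum_const, Finset.card_range, smul_eq_mul, mul_one,
      ← Nat.odd_iff]
    exact hN
  set s : ℕ := ∑ i ∈ Finset.range n, ℓ ^ i with hs
  have hgeom : (ℓ - 1) * s = ℓ ^ n - 1 := by
    have h := geom_sum_mul (ℓ : ℤ) n
    have hs' : ((s : ℕ) : ℤ) = ∑ i ∈ Finset.range n, (ℓ : ℤ) ^ i := by
      rw [hs]; push_cast; rfl
    have h1 : 1 ≤ ℓ ^ n := Nat.one_le_pow _ _ (by omega)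
    zify [hℓ1.le, h1]
    rw [← hs'] at h
    linear_combination h
  have hKdiv : Fintype.card K / 2 = (ℓ / 2) * s := by
    obtain ⟨k, hk⟩ := hℓodd
    have h2k : ℓ - 1 = 2 * k := by omega
    rw [h2k, mul_assoc] at hgeom
    have hl2 : ℓ / 2 = k := by omega
    have hpos : 1 ≤ ℓ ^ n := Nat.one_le_pow _ _ (by omega)
    rw [hKℓ, hl2]
    omega
  have hcK : ¬ IsSquare c' := by
    intro hsq
    have h1 : c' ^ (Fintype.card K / 2) = 1 :=
      (FiniteField.isSquare_iff hcharK hc'0).mp hsq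
    have h2 : c' ^ (Fintype.card K / 2) = -1 := by
      rw [hKdiv, pow_mul, hc', ← map_pow, hcL, map_neg, map_one]
      exact Odd.neg_one_pow (hS n hoddq)
    rw [h1] at h2
    exact Ring.neg_one_ne_one_of_char_ne_two hcharK h2.symm
  -- quadratic character facts
  set χ := quadraticChar K with hχ
  have hχc' : χ c' = -1 := quadraticChar_neg_one_iff_not_isSquare.mpr hcK
  -- the trace-zero sets
  set Z : Finset K := Finset.univ.filter (fun b => Algebra.trace L K b = 0) with hZ
  set T : Finset K := Z.erase 0 with hT
  have hmemT : ∀ b : K, b ∈ T ↔ b ≠ 0 ∧ Algebra.trace L K b = 0 := by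
    intro b
    simp [hT, hZ, Finset.mem_erase, Finset.mem_filter]
  -- cardinality of Z via the kernel of the trace map
  have hsurj : Function.Surjective (Algebra.trace L K) := Algebra.trace_surjective L K
  set f : K →+ L := (Algebra.trace L K).toAddMonoidHom with hf
  have hfsurj : Function.Surjective f := hsurj
  have hcard1 : Nat.card K = Nat.card (K ⧸ f.ker) * Nat.card f.ker :=
    AddSubgroup.card_eq_card_quotient_mul_card_addSubgroup f.ker
  have hquot : Nat.card (K ⧸ f.ker) = Nat.card L :=
    Nat.card_congr (QuotientAddGroup.quotientKerEquivOfSurjective f hfsurj).toEquiv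
  have hker : Nat.card f.ker = q ^ (m - m₁) := by
    have h1 : Nat.card K = q ^ m := by rw [Nat.card_eq_fintype_card, hcardK]
    have h2 : Nat.card L = q ^ m₁ := by rw [Nat.card_eq_fintype_card]; exact hℓq
    rw [h1, hquot, h2] at hcard1
    have h3 : q ^ m = q ^ m₁ * q ^ (m - m₁) := by
      rw [← pow_add]; congr 1; omega
    rw [h3] at hcard1
    exact (Nat.eq_of_mul_eq_mul_left (pow_pos (by omega : 0 < q) m₁) hcard1.symm)
  have hZcard : Z.card = q ^ (m - m₁) := by
    rw [← hker, Nat.card_eq_fintype_card]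
    rw [hZ, ← Fintype.card_subtype]
    apply Fintype.card_congr
    exact Equiv.subtypeEquivRight (fun x => by simp [hf, AddMonoidHom.mem_ker])
  have hTcard : T.card = q ^ (m - m₁) - 1 := by
    rw [hT, Finset.card_erase_of_mem, hZcard]
    simp [hZ]
  -- split T into squares and nonsquares
  set S : Finset K := T.filter (fun b => χ b = 1) with hSdef
  set N : Finset K := T.filter (fun b => ¬ χ b = 1) with hNdef
  have hSN : S.card + N.card = T.card := Finset.card_filter_add_card_filter_not _
  -- bijection between S and N by multiplication by c'
  have hcardSN : S.card = N.card := by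
    apply Finset.card_bij (fun b _ => c' * b)
    · intro a ha
      rw [hSdef, Finset.mem_filter, hmemT] at ha
      obtain ⟨⟨ha0, hatr⟩, haχ⟩ := ha
      rw [hNdef, Finset.mem_filter, hmemT]
      refine ⟨⟨mul_ne_zero hc'0 ha0, ?_⟩, ?_⟩
      · rw [hc', ← Algebra.smul_def, map_smul, hatr, smul_zero]
      · rw [map_mul, hχc', haχ]; norm_num
    · intro a₁ ha₁ a₂ ha₂ h
      exact mul_left_cancel₀ hc'0 h
    · intro b hb
      rw [hNdef, Finset.mem_filter, hmemT] at hb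
      obtain ⟨⟨hb0, hbtr⟩, hbχ⟩ := hb
      have hbχ' : χ b = -1 := (quadraticChar_eq_neg_one_iff_not_one hb0).mpr hbχ
      refine ⟨c'⁻¹ * b, ?_, ?_⟩
      · rw [hSdef, Finset.mem_filter, hmemT]
        refine ⟨⟨mul_ne_zero (inv_ne_zero hc'0) hb0, ?_⟩, ?_⟩
        · rw [hc', ← map_inv₀, ← Algebra.smul_def, map_smul, hbtr, smul_zero]
        · have h := map_mul χ c' (c'⁻¹ * b)
          rw [← mul_assoc, mul_inv_cancel₀ hc'0, one_mul, hbχ', hχc'] at h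
          omega
      · rw [← mul_assoc, mul_inv_cancel₀ hc'0, one_mul]
  -- identify the target set with S
  have hmain : Nat.card {b : K // b ≠ 0 ∧ (∃ y : K, y ^ 2 = b) ∧ Algebra.trace L K b = 0}
      = S.card := by
    rw [Nat.card_eq_fintype_card, Fintype.card_subtype]
    congr 1
    ext b
    simp only [hSdef, Finset.mem_filter, hmemT, Finset.mem_filter, Finset.mem_univ, true_and]
    constructor
    · rintro ⟨hb0, ⟨y, hy⟩, htr⟩
      exact ⟨⟨hb0, htr⟩, (quadraticChar_one_iff_isSquare hb0).mpr ⟨y, by rw [← hy]; ring⟩⟩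
    · rintro ⟨⟨hb0, htr⟩, hbχ⟩
      obtain ⟨y, hy⟩ := (quadraticChar_one_iff_isSquare hb0).mp hbχ
      exact ⟨hb0, ⟨y, by rw [hy]; ring⟩, htr⟩
  -- conclude
  have heven : (q ^ (m - m₁) - 1) % 2 = 0 := by
    have h1 : Odd (q ^ (m - m₁)) := hqodd.pow
    rw [Nat.odd_iff] at h1
    have h2 : 1 ≤ q ^ (m - m₁) := Nat.one_le_pow _ _ (by omega)
    omega
  rw [hmain]
  omega
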